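/- Let ρ = 10, x⊙y = xᵀJ_{10}y, P_1 = (1,1,1,1,0,0,−1,−1,1,1) and P_2 = (1,1,1,1,2,2,−1,−3,1,3). Then P_1⊙P_1 = 0, P_2⊙P_2 = 0, P_1⊙P_2 = −8 ≠ 0, and the map φ_{P_1,P_2}(x) = 2((P_1⊙x)·P_2 + (P_2⊙x)·P_1)/(P_1⊙P_2) − x belongs to O^+_{Λ_{10}}: it maps ℤ^{10} onto ℤ^{10}, preserves the Lorentz product, and satisfies (φ_{P_1,P_2}(D))⊙D < 0 where D = (1,…,1). -/

import Mathlib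

/-- The Lorentz product over `ℝ`, given by the matrix `J_ρ` with diagonal
entries `1` and off-diagonal entries `-1`. -/
noncomputable def lor {ρ : ℕ} (x y : Fin ρ → ℝ) : ℝ :=
  ∑ i, ∑ j, x i * (if i = j then (1 : ℝ) else -1) * y j

/-- The map `φ_{P,Q}(x) = 2((P⊙x)Q + (Q⊙x)P)/(P⊙Q) - x`. -/
noncomputable def phiV {ρ : ℕ} (P Q : Fin ρ → ℝ) (x : Fin ρ → ℝ) : Fin ρ → ℝ :=
  (2 / lor P Q) • ((lor P x) • Q + (lor Q x) • P) - x

/- Auxiliary lemmas -/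

lemma g2_1 : (1 : Fin 2) = Fin.succ 0 := rfl
lemma g3_1 : (1 : Fin 3) = Fin.succ 0 := rfl
lemma g3_2 : (2 : Fin 3) = Fin.succ 1 := rfl
lemma g4_1 : (1 : Fin 4) = Fin.succ 0 := rfl
lemma g4_2 : (2 : Fin 4) = Fin.succ 1 := rfl
lemma g4_3 : (3 : Fin 4) = Fin.succ 2 := rfl
lemma g5_1 : (1 : Fin 5) = Fin.succ 0 := rfl
lemma g5_2 : (2 : Fin 5) = Fin.succ 1 := rfl
lemma g5_3 : (3 : Fin 5) = Fin.succ 2 := rfl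
lemma g5_4 : (4 : Fin 5) = Fin.succ 3 := rfl
lemma g6_1 : (1 : Fin 6) = Fin.succ 0 := rfl
lemma g6_2 : (2 : Fin 6) = Fin.succ 1 := rfl
lemma g6_3 : (3 : Fin 6) = Fin.succ 2 := rfl
lemma g6_4 : (4 : Fin 6) = Fin.succ 3 := rfl
lemma g6_5 : (5 : Fin 6) = Fin.succ 4 := rfl
lemma g7_1 : (1 : Fin 7) = Fin.succ 0 := rfl
lemma g7_2 : (2 : Fin 7) = Fin.succ 1 := rfl
lemma g7_3 : (3 : Fin 7) = Fin.succ 2 := rfl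
lemma g7_4 : (4 : Fin 7) = Fin.succ 3 := rfl
lemma g7_5 : (5 : Fin 7) = Fin.succ 4 := rfl
lemma g7_6 : (6 : Fin 7) = Fin.succ 5 := rfl
lemma g8_1 : (1 : Fin 8) = Fin.succ 0 := rfl
lemma g8_2 : (2 : Fin 8) = Fin.succ 1 := rfl
lemma g8_3 : (3 : Fin 8) = Fin.succ 2 := rfl
lemma g8_4 : (4 : Fin 8) = Fin.succ 3 := rfl
lemma g8_5 : (5 : Fin 8) = Fin.succ 4 := rfl
lemma g8_6 : (6 : Fin 8) = Fin.succ 5 := rfl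
lemma g8_7 : (7 : Fin 8) = Fin.succ 6 := rfl
lemma g9_1 : (1 : Fin 9) = Fin.succ 0 := rfl
lemma g9_2 : (2 : Fin 9) = Fin.succ 1 := rfl
lemma g9_3 : (3 : Fin 9) = Fin.succ 2 := rfl
lemma g9_4 : (4 : Fin 9) = Fin.succ 3 := rfl
lemma g9_5 : (5 : Fin 9) = Fin.succ 4 := rfl
lemma g9_6 : (6 : Fin 9) = Fin.succ 5 := rfl
lemma g9_7 : (7 : Fin 9) = Fin.succ 6 := rfl
lemma g9_8 : (8 : Fin 9) = Fin.succ 7 := rfl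
lemma g10_1 : (1 : Fin 10) = Fin.succ 0 := rfl
lemma g10_2 : (2 : Fin 10) = Fin.succ 1 := rfl
lemma g10_3 : (3 : Fin 10) = Fin.succ 2 := rfl
lemma g10_4 : (4 : Fin 10) = Fin.succ 3 := rfl
lemma g10_5 : (5 : Fin 10) = Fin.succ 4 := rfl
lemma g10_6 : (6 : Fin 10) = Fin.succ 5 := rfl
lemma g10_7 : (7 : Fin 10) = Fin.succ 6 := rfl
lemma g10_8 : (8 : Fin 10) = Fin.succ 7 := rfl
lemma g10_9 : (9 : Fin 10) = Fin.succ 8 := rfl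

lemma m2_0 (h : (0:ℕ) < 2) : (⟨0, h⟩ : Fin 2) = (0 : Fin 2) := rfl
lemma m2_1 (h : (1:ℕ) < 2) : (⟨1, h⟩ : Fin 2) = (1 : Fin 2) := rfl
lemma m3_0 (h : (0:ℕ) < 3) : (⟨0, h⟩ : Fin 3) = (0 : Fin 3) := rfl
lemma m3_1 (h : (1:ℕ) < 3) : (⟨1, h⟩ : Fin 3) = (1 : Fin 3) := rfl
lemma m3_2 (h : (2:ℕ) < 3) : (⟨2, h⟩ : Fin 3) = (2 : Fin 3) := rfl
lemma m4_0 (h : (0:ℕ) < 4) : (⟨0, h⟩ : Fin 4) = (0 : Fin 4) := rfl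
lemma m4_1 (h : (1:ℕ) < 4) : (⟨1, h⟩ : Fin 4) = (1 : Fin 4) := rfl
lemma m4_2 (h : (2:ℕ) < 4) : (⟨2, h⟩ : Fin 4) = (2 : Fin 4) := rfl
lemma m4_3 (h : (3:ℕ) < 4) : (⟨3, h⟩ : Fin 4) = (3 : Fin 4) := rfl
lemma m5_0 (h : (0:ℕ) < 5) : (⟨0, h⟩ : Fin 5) = (0 : Fin 5) := rfl
lemma m5_1 (h : (1:ℕ) < 5) : (⟨1, h⟩ : Fin 5) = (1 : Fin 5) := rfl
lemma m5_2 (h : (2:ℕ) < 5) : (⟨2, h⟩ : Fin 5) = (2 : Fin 5) := rfl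
lemma m5_3 (h : (3:ℕ) < 5) : (⟨3, h⟩ : Fin 5) = (3 : Fin 5) := rfl
lemma m5_4 (h : (4:ℕ) < 5) : (⟨4, h⟩ : Fin 5) = (4 : Fin 5) := rfl
lemma m6_0 (h : (0:ℕ) < 6) : (⟨0, h⟩ : Fin 6) = (0 : Fin 6) := rfl
lemma m6_1 (h : (1:ℕ) < 6) : (⟨1, h⟩ : Fin 6) = (1 : Fin 6) := rfl
lemma m6_2 (h : (2:ℕ) < 6) : (⟨2, h⟩ : Fin 6) = (2 : Fin 6) := rfl
lemma m6_3 (h : (3:ℕ) < 6) : (⟨3, h⟩ : Fin 6) = (3 : Fin 6) := rfl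
lemma m6_4 (h : (4:ℕ) < 6) : (⟨4, h⟩ : Fin 6) = (4 : Fin 6) := rfl
lemma m6_5 (h : (5:ℕ) < 6) : (⟨5, h⟩ : Fin 6) = (5 : Fin 6) := rfl
lemma m7_0 (h : (0:ℕ) < 7) : (⟨0, h⟩ : Fin 7) = (0 : Fin 7) := rfl
lemma m7_1 (h : (1:ℕ) < 7) : (⟨1, h⟩ : Fin 7) = (1 : Fin 7) := rfl
lemma m7_2 (h : (2:ℕ) < 7) : (⟨2, h⟩ : Fin 7) = (2 : Fin 7) := rfl
lemma m7_3 (h : (3:ℕ) < 7) : (⟨3, h⟩ : Fin 7) = (3 : Fin 7) := rfl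
lemma m7_4 (h : (4:ℕ) < 7) : (⟨4, h⟩ : Fin 7) = (4 : Fin 7) := rfl
lemma m7_5 (h : (5:ℕ) < 7) : (⟨5, h⟩ : Fin 7) = (5 : Fin 7) := rfl
lemma m7_6 (h : (6:ℕ) < 7) : (⟨6, h⟩ : Fin 7) = (6 : Fin 7) := rfl
lemma m8_0 (h : (0:ℕ) < 8) : (⟨0, h⟩ : Fin 8) = (0 : Fin 8) := rfl
lemma m8_1 (h : (1:ℕ) < 8) : (⟨1, h⟩ : Fin 8) = (1 : Fin 8) := rfl
lemma m8_2 (h : (2:ℕ) < 8) : (⟨2, h⟩ : Fin 8) = (2 : Fin 8) := rfl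
lemma m8_3 (h : (3:ℕ) < 8) : (⟨3, h⟩ : Fin 8) = (3 : Fin 8) := rfl
lemma m8_4 (h : (4:ℕ) < 8) : (⟨4, h⟩ : Fin 8) = (4 : Fin 8) := rfl
lemma m8_5 (h : (5:ℕ) < 8) : (⟨5, h⟩ : Fin 8) = (5 : Fin 8) := rfl
lemma m8_6 (h : (6:ℕ) < 8) : (⟨6, h⟩ : Fin 8) = (6 : Fin 8) := rfl
lemma m8_7 (h : (7:ℕ) < 8) : (⟨7, h⟩ : Fin 8) = (7 : Fin 8) := rfl
lemma m9_0 (h : (0:ℕ) < 9) : (⟨0, h⟩ : Fin 9) = (0 : Fin 9) := rfl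
lemma m9_1 (h : (1:ℕ) < 9) : (⟨1, h⟩ : Fin 9) = (1 : Fin 9) := rfl
lemma m9_2 (h : (2:ℕ) < 9) : (⟨2, h⟩ : Fin 9) = (2 : Fin 9) := rfl
lemma m9_3 (h : (3:ℕ) < 9) : (⟨3, h⟩ : Fin 9) = (3 : Fin 9) := rfl
lemma m9_4 (h : (4:ℕ) < 9) : (⟨4, h⟩ : Fin 9) = (4 : Fin 9) := rfl
lemma m9_5 (h : (5:ℕ) < 9) : (⟨5, h⟩ : Fin 9) = (5 : Fin 9) := rfl
lemma m9_6 (h : (6:ℕ) < 9) : (⟨6, h⟩ : Fin 9) = (6 : Fin 9) := rfl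
lemma m9_7 (h : (7:ℕ) < 9) : (⟨7, h⟩ : Fin 9) = (7 : Fin 9) := rfl
lemma m9_8 (h : (8:ℕ) < 9) : (⟨8, h⟩ : Fin 9) = (8 : Fin 9) := rfl
lemma m10_0 (h : (0:ℕ) < 10) : (⟨0, h⟩ : Fin 10) = (0 : Fin 10) := rfl
lemma m10_1 (h : (1:ℕ) < 10) : (⟨1, h⟩ : Fin 10) = (1 : Fin 10) := rfl
lemma m10_2 (h : (2:ℕ) < 10) : (⟨2, h⟩ : Fin 10) = (2 : Fin 10) := rfl
lemma m10_3 (h : (3:ℕ) < 10) : (⟨3, h⟩ : Fin 10) = (3 : Fin 10) := rfl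
lemma m10_4 (h : (4:ℕ) < 10) : (⟨4, h⟩ : Fin 10) = (4 : Fin 10) := rfl
lemma m10_5 (h : (5:ℕ) < 10) : (⟨5, h⟩ : Fin 10) = (5 : Fin 10) := rfl
lemma m10_6 (h : (6:ℕ) < 10) : (⟨6, h⟩ : Fin 10) = (6 : Fin 10) := rfl
lemma m10_7 (h : (7:ℕ) < 10) : (⟨7, h⟩ : Fin 10) = (7 : Fin 10) := rfl
lemma m10_8 (h : (8:ℕ) < 10) : (⟨8, h⟩ : Fin 10) = (8 : Fin 10) := rfl
lemma m10_9 (h : (9:ℕ) < 10) : (⟨9, h⟩ : Fin 10) = (9 : Fin 10) := rfl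

lemma lor_comm {ρ : ℕ} (x y : Fin ρ → ℝ) : lor x y = lor y x := by
  unfold lor
  rw [Finset.sum_comm]
  refine Finset.sum_congr rfl fun a _ => Finset.sum_congr rfl fun b _ => ?_
  by_cases h : a = b
  · simp [h]; ring
  · simp [h, Ne.symm h]; ring

lemma lor_add_left {ρ : ℕ} (u v w : Fin ρ → ℝ) : lor (u + v) w = lor u w + lor v w := by
  unfold lor
  rw [← Finset.sum_add_distrib]
  refine Finset.sum_congr rfl fun a _ => ?_
  rw [← Finset.sum_add_distrib]
  refine Finset.sum_congr rfl fun b _ => ?_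
  split <;> (simp only [Pi.add_apply, Pi.sub_apply, Pi.smul_apply, smul_eq_mul]; ring)

lemma lor_sub_left {ρ : ℕ} (u v w : Fin ρ → ℝ) : lor (u - v) w = lor u w - lor v w := by
  unfold lor
  rw [← Finset.sum_sub_distrib]
  refine Finset.sum_congr rfl fun a _ => ?_
  rw [← Finset.sum_sub_distrib]
  refine Finset.sum_congr rfl fun b _ => ?_
  split <;> (simp only [Pi.add_apply, Pi.sub_apply, Pi.smul_apply, smul_eq_mul]; ring)

lemma lor_smul_left {ρ : ℕ} (c : ℝ) (u w : Fin ρ → ℝ) : lor (c • u) w = c * lor u w := by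
  unfold lor
  rw [Finset.mul_sum]
  refine Finset.sum_congr rfl fun a _ => ?_
  rw [Finset.mul_sum]
  refine Finset.sum_congr rfl fun b _ => ?_
  split <;> (simp only [Pi.add_apply, Pi.sub_apply, Pi.smul_apply, smul_eq_mul]; ring)

lemma lor_phiV_left {ρ : ℕ} (P Q x w : Fin ρ → ℝ) :
    lor (phiV P Q x) w =
      2 / lor P Q * (lor P x * lor Q w + lor Q x * lor P w) - lor x w := by
  unfold phiV
  rw [lor_sub_left, lor_smul_left, lor_add_left, lor_smul_left, lor_smul_left]

lemma lor_P_phi {ρ : ℕ} (P Q y : Fin ρ → ℝ) (hP : lor P P = 0) (hc : lor P Q ≠ 0) :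
    lor P (phiV P Q y) = lor P y := by
  rw [lor_comm, lor_phiV_left, lor_comm Q P, hP, lor_comm y P]
  field_simp
  ring

lemma lor_Q_phi {ρ : ℕ} (P Q y : Fin ρ → ℝ) (hQ : lor Q Q = 0) (hc : lor P Q ≠ 0) :
    lor Q (phiV P Q y) = lor Q y := by
  rw [lor_comm, lor_phiV_left, hQ, lor_comm y Q]
  field_simp
  ring

lemma lor_phi_phi {ρ : ℕ} (P Q : Fin ρ → ℝ) (hP : lor P P = 0) (hQ : lor Q Q = 0)
    (hc : lor P Q ≠ 0) (x y : Fin ρ → ℝ) :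
    lor (phiV P Q x) (phiV P Q y) = lor x y := by
  rw [lor_phiV_left, lor_P_phi P Q y hP hc, lor_Q_phi P Q y hQ hc,
    lor_comm x (phiV P Q y), lor_phiV_left, lor_comm y x]
  field_simp
  ring

lemma phi_phi {ρ : ℕ} (P Q : Fin ρ → ℝ) (hP : lor P P = 0) (hQ : lor Q Q = 0)
    (hc : lor P Q ≠ 0) (x : Fin ρ → ℝ) :
    phiV P Q (phiV P Q x) = x := by
  conv_lhs => rw [phiV]
  rw [lor_P_phi P Q x hP hc, lor_Q_phi P Q x hQ hc]
  rw [phiV, sub_sub_cancel]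

lemma lorP1 (x : Fin 10 → ℝ) : lor ![1, 1, 1, 1, 0, 0, -1, -1, 1, 1] x =
    -2*x 0 - 2*x 1 - 2*x 2 - 2*x 3 - 4*x 4 - 4*x 5 - 6*x 6 - 6*x 7 - 2*x 8 - 2*x 9 := by
  simp [lor, Fin.sum_univ_succ]
  ring

lemma lorP2 (x : Fin 10 → ℝ) : lor ![1, 1, 1, 1, 2, 2, -1, -3, 1, 3] x =
    -6*x 0 - 6*x 1 - 6*x 2 - 6*x 3 - 4*x 4 - 4*x 5 - 10*x 6 - 14*x 7 - 6*x 8 - 2*x 9 := by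
  simp [lor, Fin.sum_univ_succ]
  ring


set_option maxHeartbeats 1600000 in
/-- For `ρ = 10`, `P₁ = (1,1,1,1,0,0,-1,-1,1,1)` and
`P₂ = (1,1,1,1,2,2,-1,-3,1,3)`: `P₁⊙P₁ = 0`, `P₂⊙P₂ = 0`, `P₁⊙P₂ = -8 ≠ 0`,
and `φ_{P₁,P₂}` lies in `O⁺_{Λ₁₀}`: it maps `ℤ¹⁰` onto `ℤ¹⁰`, preserves the
Lorentz product, and satisfies `φ(D)⊙D < 0`. -/
theorem phi_P1_P2_in_OPlus :
    let P₁ : Fin 10 → ℝ := ![1, 1, 1, 1, 0, 0, -1, -1, 1, 1]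
    let P₂ : Fin 10 → ℝ := ![1, 1, 1, 1, 2, 2, -1, -3, 1, 3]
    let D : Fin 10 → ℝ := fun _ => 1
    lor P₁ P₁ = 0 ∧ lor P₂ P₂ = 0 ∧ lor P₁ P₂ = -8 ∧ lor P₁ P₂ ≠ 0 ∧
    (∀ x : Fin 10 → ℤ, ∃ y : Fin 10 → ℤ,
      phiV P₁ P₂ (fun t => (x t : ℝ)) = fun t => (y t : ℝ)) ∧
    (∀ y : Fin 10 → ℤ, ∃ x : Fin 10 → ℤ,
      phiV P₁ P₂ (fun t => (x t : ℝ)) = fun t => (y t : ℝ)) ∧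
    (∀ x y : Fin 10 → ℝ, lor (phiV P₁ P₂ x) (phiV P₁ P₂ y) = lor x y) ∧
    lor (phiV P₁ P₂ D) D < 0 := by
  intro P₁ P₂ D
  have h11 : lor P₁ P₁ = 0 := by
    show lor ![1, 1, 1, 1, 0, 0, -1, -1, 1, 1] ![1, 1, 1, 1, 0, 0, -1, -1, 1, 1] = 0
    rw [lorP1]
    simp only [g2_1, g3_1, g3_2, g4_1, g4_2, g4_3, g5_1, g5_2, g5_3, g5_4, g6_1, g6_2, g6_3, g6_4, g6_5, g7_1, g7_2, g7_3, g7_4, g7_5, g7_6, g8_1, g8_2, g8_3, g8_4, g8_5, g8_6, g8_7, g9_1, g9_2, g9_3, g9_4, g9_5, g9_6, g9_7, g9_8, g10_1, g10_2, g10_3, g10_4, g10_5, g10_6, g10_7, g10_8, g10_9, Matrix.cons_val_succ, Matrix.cons_val_zero]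
    norm_num
  have h22 : lor P₂ P₂ = 0 := by
    show lor ![1, 1, 1, 1, 2, 2, -1, -3, 1, 3] ![1, 1, 1, 1, 2, 2, -1, -3, 1, 3] = 0
    rw [lorP2]
    simp only [g2_1, g3_1, g3_2, g4_1, g4_2, g4_3, g5_1, g5_2, g5_3, g5_4, g6_1, g6_2, g6_3, g6_4, g6_5, g7_1, g7_2, g7_3, g7_4, g7_5, g7_6, g8_1, g8_2, g8_3, g8_4, g8_5, g8_6, g8_7, g9_1, g9_2, g9_3, g9_4, g9_5, g9_6, g9_7, g9_8, g10_1, g10_2, g10_3, g10_4, g10_5, g10_6, g10_7, g10_8, g10_9, Matrix.cons_val_succ, Matrix.cons_val_zero]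
    norm_num
  have h12 : lor P₁ P₂ = -8 := by
    show lor ![1, 1, 1, 1, 0, 0, -1, -1, 1, 1] ![1, 1, 1, 1, 2, 2, -1, -3, 1, 3] = -8
    rw [lorP1]
    simp only [g2_1, g3_1, g3_2, g4_1, g4_2, g4_3, g5_1, g5_2, g5_3, g5_4, g6_1, g6_2, g6_3, g6_4, g6_5, g7_1, g7_2, g7_3, g7_4, g7_5, g7_6, g8_1, g8_2, g8_3, g8_4, g8_5, g8_6, g8_7, g9_1, g9_2, g9_3, g9_4, g9_5, g9_6, g9_7, g9_8, g10_1, g10_2, g10_3, g10_4, g10_5, g10_6, g10_7, g10_8, g10_9, Matrix.cons_val_succ, Matrix.cons_val_zero]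
    norm_num
  have hne : lor P₁ P₂ ≠ 0 := by rw [h12]; norm_num
  have fwd : ∀ x : Fin 10 → ℤ, ∃ y : Fin 10 → ℤ,
      phiV P₁ P₂ (fun t => (x t : ℝ)) = fun t => (y t : ℝ) := by
    intro x
    refine ⟨fun t =>
      -((x 0 + x 1 + x 2 + x 3 - x 6 - x 7 + x 8 + x 9) * ![1,1,1,1,1,1,-1,-2,1,2] t
        + (x 4 + x 5 - x 7 + x 9) * ![1,1,1,1,0,0,-1,-1,1,1] t)
      + (x 0 + x 1 + x 2 + x 3 + x 4 + x 5 + x 6 + x 7 + x 8 + x 9) * ![3,3,3,3,2,2,-3,-5,3,5] t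
      - x t, ?_⟩
    show phiV ![1, 1, 1, 1, 0, 0, -1, -1, 1, 1] ![1, 1, 1, 1, 2, 2, -1, -3, 1, 3]
      (fun t => (x t : ℝ)) = _
    have h12' : lor ![(1:ℝ), 1, 1, 1, 0, 0, -1, -1, 1, 1] ![1, 1, 1, 1, 2, 2, -1, -3, 1, 3] = -8 :=
      h12
    funext t
    fin_cases t <;>
    · simp only [phiV, h12', lorP1, lorP2, Pi.sub_apply, Pi.smul_apply, Pi.add_apply, smul_eq_mul]
      simp only [m2_0, m2_1, m3_0, m3_1, m3_2, m4_0, m4_1, m4_2, m4_3, m5_0, m5_1, m5_2, m5_3, m5_4, m6_0, m6_1, m6_2, m6_3, m6_4, m6_5, m7_0, m7_1, m7_2, m7_3, m7_4, m7_5, m7_6, m8_0, m8_1, m8_2, m8_3, m8_4, m8_5, m8_6, m8_7, m9_0, m9_1, m9_2, m9_3, m9_4, m9_5, m9_6, m9_7, m9_8, m10_0, m10_1, m10_2, m10_3, m10_4, m10_5, m10_6, m10_7, m10_8, m10_9, g2_1, g3_1, g3_2, g4_1, g4_2, g4_3, g5_1, g5_2, g5_3, g5_4, g6_1, g6_2,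 g6_3, g6_4, g6_5, g7_1, g7_2, g7_3, g7_4, g7_5, g7_6, g8_1, g8_2, g8_3, g8_4, g8_5, g8_6, g8_7, g9_1, g9_2, g9_3, g9_4, g9_5, g9_6, g9_7, g9_8, g10_1, g10_2, g10_3, g10_4, g10_5, g10_6, g10_7, g10_8, g10_9, Matrix.cons_val_succ, Matrix.cons_val_zero]
      push_cast
      ring
  refine ⟨h11, h22, h12, hne, fwd, ?_, fun x y => lor_phi_phi P₁ P₂ h11 h22 hne x y, ?_⟩
  · intro y
    obtain ⟨z, hz⟩ := fwd y
    exact ⟨z, by rw [← hz, phi_phi P₁ P₂ h11 h22 hne]⟩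
  · have hd1 : lor P₁ D = -32 := by
      show lor ![1, 1, 1, 1, 0, 0, -1, -1, 1, 1] (fun _ => (1:ℝ)) = -32
      rw [lorP1]; norm_num
    have hd2 : lor P₂ D = -64 := by
      show lor ![1, 1, 1, 1, 2, 2, -1, -3, 1, 3] (fun _ => (1:ℝ)) = -64
      rw [lorP2]; norm_num
    have hdd : lor D D = -80 := by
      show lor (fun _ => (1:ℝ)) (fun _ => (1:ℝ)) = -80
      simp [lor, Fin.sum_univ_succ]
      norm_num
    rw [lor_phiV_left, hd1, hd2, hdd, h12]
    norm_num
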